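/- Player 1 has an opacity-enforcing winning strategy in the original game G with secret objective given by DFA A if and only if Player 1 has a sure-winning strategy in the belief-augmented game for the reachability objective ◊𝓕_O, where 𝓕_O = {(s,q,b) : q ∈ F and b ∩ (S × (Q \ F)) ≠ ∅}. -/
import Mathlib


/-- Belief update: given belief `b` and observation `o`, the next belief. -/
def beliefUpdate {S A Q Ω Γ : Type} (T : S → A → S) (δ : Q → Γ → Q)
    (L : S → Γ) (O : S → A → S → Ω) (b : Set (S × Q)) (o : Ω) : Set (S × Q) :=
  {p | ∃ sq ∈ b, ∃ abar : A, O sq.1 abar p.1 = o ∧ T sq.1 abar = p.1 ∧ δ sq.2 (L p.1) = p.2}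

/-- The deterministic transition function of the belief-augmented game on
states `(s, q, b) : S × Q × Set (S × Q)`. -/
def Δb {S A Q Ω Γ : Type} (T : S → A → S) (δ : Q → Γ → Q) (L : S → Γ)
    (O : S → A → S → Ω) (v : S × Q × Set (S × Q)) (α : A) : S × Q × Set (S × Q) :=
  (T v.1 α, δ v.2.1 (L (T v.1 α)), beliefUpdate T δ L O v.2.2 (O v.1 α (T v.1 α)))

/-- The target set `𝓕_O` of opaque-winning states: `q ∈ F` and the belief
intersects `S × (Q \ F)`. -/
def FO {S Q : Type} (F : Set Q) : Set (S × Q × Set (S × Q)) :=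
  {v | v.2.1 ∈ F ∧ ∃ p ∈ v.2.2, p.2 ∉ F}

/-- The target set `𝓕 = S × F × 2^(S×Q)` of winning states. -/
def Fwin {S Q : Type} (F : Set Q) : Set (S × Q × Set (S × Q)) :=
  {v | v.2.1 ∈ F}

/-- The history of actions taken before step `i`. -/
def hist {A : Type} (a : ℕ → A) (i : ℕ) : List A :=
  List.ofFn (fun j : Fin i => a j.1)

/-- An infinite play `(vs, a)` of the belief-augmented game from `v`,
consistent with P1's strategy `π1` (used on P1's turns, `turn = true`) and
P2's strategy `π2` (used on P2's turns).  Since the game is deterministic,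
a history from a fixed start is identified with its action sequence. -/
def ConsistentV {S A Q Ω Γ : Type} (turn : S → Bool) (T : S → A → S)
    (δ : Q → Γ → Q) (L : S → Γ) (O : S → A → S → Ω)
    (π1 π2 : List A → A) (v : S × Q × Set (S × Q))
    (vs : ℕ → S × Q × Set (S × Q)) (a : ℕ → A) : Prop :=
  vs 0 = v ∧ (∀ i, vs (i + 1) = Δb T δ L O (vs i) (a i)) ∧
  (∀ i, turn (vs i).1 = true → a i = π1 (hist a i)) ∧
  (∀ i, turn (vs i).1 = false → a i = π2 (hist a i))

/-- An infinite play `(s, a)` of the original arena `G` from `s0`,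
consistent with strategies `π1` (on P1's turns) and `π2` (on P2's turns). -/
def ConsistentG {S A : Type} (turn : S → Bool) (T : S → A → S)
    (π1 π2 : List A → A) (s0 : S) (s : ℕ → S) (a : ℕ → A) : Prop :=
  s 0 = s0 ∧ (∀ i, s (i + 1) = T (s i) (a i)) ∧
  (∀ i, turn (s i) = true → a i = π1 (hist a i)) ∧
  (∀ i, turn (s i) = false → a i = π2 (hist a i))

/-- The DFA state traced along an infinite play of `G`. -/
def qtr {S Q Γ : Type} (δ : Q → Γ → Q) (L : S → Γ) (ι : Q) (s : ℕ → S) : ℕ → Q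
  | 0 => δ ι (L (s 0))
  | i + 1 => δ (qtr δ L ι s i) (L (s (i + 1)))

/-- At step `n`, the (finite prefix of the) play is opacity-enforcing winning:
its label sequence is accepted, and there is an observation-equivalent finite
play of `G` of the same length whose label sequence is not accepted. -/
def OWat {S A Q Ω Γ : Type} (turn : S → Bool) (T : S → A → S) (δ : Q → Γ → Q)
    (L : S → Γ) (O : S → A → S → Ω) (ι : Q) (F : Set Q) (s0 : S)
    (s : ℕ → S) (a : ℕ → A) (n : ℕ) : Prop :=
  qtr δ L ι s n ∈ F ∧
  ∃ (s' : ℕ → S) (a' : ℕ → A), s' 0 = s0 ∧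
    (∀ i < n, s' (i + 1) = T (s' i) (a' i)) ∧
    (∀ i < n, O (s' i) (a' i) (s' (i + 1)) = O (s i) (a i) (s (i + 1))) ∧
    qtr δ L ι s' n ∉ F

section Auxx

variable {S A Q Ω Γ : Type} (T : S → A → S) (δ : Q → Γ → Q) (L : S → Γ)
  (O : S → A → S → Ω) (ι : Q) (s0 : S)

/-- The belief set reachable after `n` steps along observation-equivalent plays. -/
def Bel (s : ℕ → S) (a : ℕ → A) (n : ℕ) : Set (S × Q) :=
  {p | ∃ (s' : ℕ → S) (a' : ℕ → A), s' 0 = s0 ∧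
    (∀ i < n, s' (i + 1) = T (s' i) (a' i)) ∧
    (∀ i < n, O (s' i) (a' i) (s' (i + 1)) = O (s i) (a i) (s (i + 1))) ∧
    s' n = p.1 ∧ qtr δ L ι s' n = p.2}

lemma qtr_congr {s s' : ℕ → S} {n : ℕ} (h : ∀ i ≤ n, s i = s' i) :
    qtr δ L ι s n = qtr δ L ι s' n := by
  induction n with
  | zero => simp [qtr, h 0 le_rfl]
  | succ n ih =>
      simp [qtr, ih (fun i hi => h i (Nat.le_succ_of_le hi)), h (n + 1) le_rfl]

lemma Bel_update (s : ℕ → S) (a : ℕ → A) (n : ℕ)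
    (hs : s (n + 1) = T (s n) (a n)) :
    beliefUpdate T δ L O (Bel T δ L O ι s0 s a n) (O (s n) (a n) (s (n + 1)))
      = Bel T δ L O ι s0 s a (n + 1) := by
  ext p
  constructor
  · rintro ⟨sq, ⟨s', a', h0, htr, hobs, hfst, hq⟩, abar, hO, hT, hδ⟩
    refine ⟨fun i => if i = n + 1 then p.1 else s' i,
            fun i => if i = n then abar else a' i, ?_, ?_, ?_, ?_, ?_⟩
    · simpa using h0
    · intro i hi
      rcases Nat.lt_succ_iff_lt_or_eq.mp hi with hi | hi
      · have h1 : i + 1 ≠ n + 1 := by omega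
        have h2 : i ≠ n + 1 := by omega
        have h3 : i ≠ n := by omega
        simp only [if_neg h1, if_neg h2, if_neg h3]
        exact htr i hi
      · subst hi
        have h2 : i ≠ i + 1 := by omega
        simp only [if_pos rfl, if_neg h2, if_true]
        rw [hfst]
        exact hT.symm
    · intro i hi
      rcases Nat.lt_succ_iff_lt_or_eq.mp hi with hi | hi
      · have h1 : i + 1 ≠ n + 1 := by omega
        have h2 : i ≠ n + 1 := by omega
        have h3 : i ≠ n := by omega
        simp only [if_neg h1, if_neg h2, if_neg h3]
        exact hobs i hi
      · subst hi
        have h2 : i ≠ i + 1 := by omega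
        simp only [if_pos rfl, if_neg h2, if_true]
        rw [hfst, hO]
    · simp
    · have heq : ∀ i ≤ n, s' i = (fun i => if i = n + 1 then p.1 else s' i) i := by
        intro i hi
        have : i ≠ n + 1 := by omega
        simp [this]
      have hqn := qtr_congr δ L ι (s' := fun i => if i = n + 1 then p.1 else s' i)
        (n := n) heq
      show qtr δ L ι _ (n + 1) = p.2
      rw [qtr, ← hqn, hq, hfst] at *
      simpa using hδ
  · rintro ⟨s', a', h0, htr, hobs, hfst, hq⟩
    refine ⟨(s' n, qtr δ L ι s' n), ⟨s', a', h0,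
      fun i hi => htr i (Nat.lt_succ_of_lt hi),
      fun i hi => hobs i (Nat.lt_succ_of_lt hi), rfl, rfl⟩, a' n, ?_, ?_, ?_⟩
    · show O (s' n) (a' n) p.1 = O (s n) (a n) (s (n + 1))
      rw [← hfst]
      exact hobs n (Nat.lt_succ_self n)
    · show T (s' n) (a' n) = p.1
      rw [← hfst]
      exact (htr n (Nat.lt_succ_self n)).symm
    · show δ (qtr δ L ι s' n) (L p.1) = p.2
      rw [← hq, ← hfst]
      rfl

lemma corresp (a : ℕ → A) (vs : ℕ → S × Q × Set (S × Q))
    (h0 : vs 0 = (s0, δ ι (L s0), {(s0, δ ι (L s0))}))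
    (hst : ∀ i, vs (i + 1) = Δb T δ L O (vs i) (a i)) (n : ℕ) :
    vs n = ((vs n).1, qtr δ L ι (fun i => (vs i).1) n,
      Bel T δ L O ι s0 (fun i => (vs i).1) a n) := by
  induction n with
  | zero =>
      rw [h0]
      have hf : (vs 0).1 = s0 := by rw [h0]
      refine Prod.ext rfl (Prod.ext ?_ ?_)
      · show δ ι (L s0) = qtr δ L ι (fun i => (vs i).1) 0
        rw [qtr]
        simp [hf]
      · show ({(s0, δ ι (L s0))} : Set (S × Q)) = Bel T δ L O ι s0 _ a 0
        ext p
        constructor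
        · rintro hp
          refine ⟨fun _ => s0, a, rfl, by omega, by omega, ?_, ?_⟩
          · simp at hp; rw [hp]
          · simp at hp; rw [hp, qtr]
        · rintro ⟨s', a', h0', -, -, hfst, hqq⟩
          have : p = (s0, δ ι (L s0)) := by
            have h1 : p.1 = s0 := by rw [← hfst, h0']
            have h2 : p.2 = δ ι (L s0) := by rw [← hqq, qtr, h0']
            exact Prod.ext h1 h2
          simp [this]
  | succ n ih =>
      have hq := congrArg (fun v => v.2.1) ih
      have hb := congrArg (fun v => v.2.2) ih
      simp only at hq hb
      have hf1 : (vs (n + 1)).1 = T (vs n).1 (a n) := by rw [hst]; rfl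
      rw [hst n]
      refine Prod.ext rfl (Prod.ext ?_ ?_)
      · show δ (vs n).2.1 (L (T (vs n).1 (a n))) = qtr δ L ι (fun i => (vs i).1) (n + 1)
        have hstep : qtr δ L ι (fun i => (vs i).1) (n + 1)
            = δ (qtr δ L ι (fun i => (vs i).1) n) (L ((vs (n + 1)).1)) := rfl
        rw [hstep, hq, hf1]
      · show beliefUpdate T δ L O (vs n).2.2 (O (vs n).1 (a n) (T (vs n).1 (a n)))
            = Bel T δ L O ι s0 (fun i => (vs i).1) a (n + 1)
        rw [hb, ← hf1]
        exact Bel_update T δ L O ι s0 (fun i => (vs i).1) a n hf1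

end Auxx

/-- P1 has an opacity-enforcing winning strategy in the original
game `G` iff P1 has a sure-winning strategy in the belief-augmented game for
the reachability objective `◊ 𝓕_O`. -/
theorem opaque_winning_iff_belief_game_reach
    {S A Q Ω Γ : Type} [Fintype S] [Fintype A] [Fintype Q]
    (turn : S → Bool) (T : S → A → S) (δ : Q → Γ → Q) (L : S → Γ)
    (O : S → A → S → Ω) (ι : Q) (F : Set Q) (s0 : S)
    (habs : ∀ q ∈ F, ∀ σ : Γ, δ q σ = q) :
    (∃ π1 : List A → A, ∀ π2 : List A → A, ∀ (s : ℕ → S) (a : ℕ → A),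
        ConsistentG turn T π1 π2 s0 s a →
        ∃ n, OWat turn T δ L O ι F s0 s a n) ↔
    (∃ π1 : List A → A, ∀ π2 : List A → A,
        ∀ (vs : ℕ → S × Q × Set (S × Q)) (a : ℕ → A),
        ConsistentV turn T δ L O π1 π2 (s0, δ ι (L s0), {(s0, δ ι (L s0))}) vs a →
        ∃ n, vs n ∈ FO F) := by
  constructor
  · rintro ⟨π1, hπ⟩
    refine ⟨π1, ?_⟩
    intro π2 vs a ⟨hv0, hvs, ht1, ht2⟩
    have hcor := corresp T δ L O ι s0 a vs hv0 hvs
    set s : ℕ → S := fun i => (vs i).1 with hsdef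
    have hG : ConsistentG turn T π1 π2 s0 s a := by
      refine ⟨by rw [hsdef]; simp [hv0], fun i => ?_, ht1, ht2⟩
      show (vs (i + 1)).1 = T (vs i).1 (a i)
      rw [hvs]; rfl
    obtain ⟨n, hqF, s', a', h0', htr', hobs', hnF⟩ := hπ π2 s a hG
    refine ⟨n, ?_, ?_⟩
    · show (vs n).2.1 ∈ F
      have := congrArg (fun v => v.2.1) (hcor n)
      simp only at this
      rw [this]; exact hqF
    · have := congrArg (fun v => v.2.2) (hcor n)
      simp only at this
      rw [this]
      exact ⟨(s' n, qtr δ L ι s' n), ⟨s', a', h0', htr', hobs', rfl, rfl⟩, hnF⟩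
  · rintro ⟨π1, hπ⟩
    refine ⟨π1, ?_⟩
    intro π2 s a ⟨hs0, hstep, ht1, ht2⟩
    let vs : ℕ → S × Q × Set (S × Q) := fun n =>
      Nat.rec (s0, δ ι (L s0), ({(s0, δ ι (L s0))} : Set (S × Q)))
        (fun i v => Δb T δ L O v (a i)) n
    have hvs : ∀ i, vs (i + 1) = Δb T δ L O (vs i) (a i) := fun i => rfl
    have hfst : ∀ i, (vs i).1 = s i := by
      intro i
      induction i with
      | zero => exact hs0.symm
      | succ i ih =>
          show T (vs i).1 (a i) = s (i + 1)
          rw [ih, hstep]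
    have hcor := corresp T δ L O ι s0 a vs rfl hvs
    have hfe : (fun i => (vs i).1) = s := funext hfst
    obtain ⟨n, hqF, p, hpb, hpF⟩ := hπ π2 vs a
      ⟨rfl, hvs, fun i hi => ht1 i (by rw [← hfst]; exact hi),
        fun i hi => ht2 i (by rw [← hfst]; exact hi)⟩
    have hq := congrArg (fun v => v.2.1) (hcor n)
    have hb := congrArg (fun v => v.2.2) (hcor n)
    simp only at hq hb
    rw [hq, hfe] at hqF
    rw [hb, hfe] at hpb
    obtain ⟨s', a', h0', htr', hobs', -, hqq⟩ := hpb
    exact ⟨n, hqF, s', a', h0', htr', hobs', by rw [hqq]; exact hpF⟩
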